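/- Let ψ be an MDP homomorphism (P_ψ(s'r|ha) = p(s'r|sb) whenever ψ(h,a)=(s,b)) and let π* be an optimal policy of the abstract MDP p. Define the uplifted policy Π̆ by Π̆(h) ∈ ψ_s^{-1}(π*(s)) for ψ(h)=s, i.e. Π̆(h) is any original action mapping to the abstract optimal action. Then V^{Π̆}(h) = V*(h) for all histories h, i.e. the uplifted policy is optimal in the original process. -/

import Mathlib

open Finset

/-- Auxiliary: a weighted average of things bounded by `C` is bounded by `C`. -/
lemma stmt2_avg_bnd {O R : Type*} [Fintype O] [Fintype R]
    (w F : O → R → ℝ) (C : ℝ)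
    (hw0 : ∀ o r, 0 ≤ w o r) (hw1 : ∑ o : O, ∑ r : R, w o r = 1)
    (hF : ∀ o r, |F o r| ≤ C) :
    |∑ o : O, ∑ r : R, w o r * F o r| ≤ C := by
  calc |∑ o : O, ∑ r : R, w o r * F o r|
      ≤ ∑ o : O, |∑ r : R, w o r * F o r| := Finset.abs_sum_le_sum_abs _ _
    _ ≤ ∑ o : O, ∑ r : R, |w o r * F o r| := by
        refine Finset.sum_le_sum fun o _ => Finset.abs_sum_le_sum_abs _ _
    _ ≤ ∑ o : O, ∑ r : R, w o r * C := by
        refine Finset.sum_le_sum fun o _ => Finset.sum_le_sum fun r _ => ?_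
        rw [abs_mul, abs_of_nonneg (hw0 o r)]
        exact mul_le_mul_of_nonneg_left (hF o r) (hw0 o r)
    _ = C := by
        simp only [← Finset.sum_mul]
        rw [hw1, one_mul]

/-- Let `ψ(h,a)=(f h, g h a)` be an MDP homomorphism and `π*` an
optimal policy of the abstract MDP `p`. If the uplifted policy `Π̆` satisfies
`Π̆(h) ∈ ψ_s^{-1}(π*(s))` for `f h = s` (i.e. `g h (Π̆ h) = π*(f h)`), then
`V^{Π̆}(h) = V*(h)` for all histories `h`: the uplifted policy is optimal in
the original process. -/
theorem stmt_2
    {H A O R S Bt : Type*} [Fintype A] [Nonempty A] [Fintype O] [Fintype R]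
    [Fintype S] [Fintype Bt] [Nonempty Bt] [DecidableEq S]
    (γ : ℝ) (hγ0 : 0 ≤ γ) (hγ1 : γ < 1)
    (ρ : R → ℝ) (hρ : ∀ r, ρ r ∈ Set.Icc (0 : ℝ) 1)
    (P : H → A → O → R → ℝ)
    (hP0 : ∀ h a o r, 0 ≤ P h a o r)
    (hP1 : ∀ h a, ∑ o : O, ∑ r : R, P h a o r = 1)
    (ext : H → A → O → R → H)
    -- the homomorphism ψ(h,a) = (f h, g h a), surjective
    (f : H → S) (g : H → A → Bt)
    (hsurj : ∀ s b, ∃ h a, f h = s ∧ g h a = b)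
    -- MDP condition: P_ψ(s' r | h a) = p(s' r | f h, g h a)
    (p : S → Bt → S → R → ℝ)
    (hMDP : ∀ h a s' r,
      (∑ o ∈ Finset.univ.filter fun o => f (ext h a o r) = s', P h a o r)
        = p (f h) (g h a) s' r)
    -- optimal (action-)value functions of the original process
    (Qstar : H → A → ℝ) (Vstar : H → ℝ)
    (hQstar : ∀ h a, Qstar h a =
      ∑ o : O, ∑ r : R, P h a o r * (ρ r + γ * Vstar (ext h a o r)))
    (hVstar : ∀ h, Vstar h = Finset.univ.sup' Finset.univ_nonempty (Qstar h))
    (hVstarBnd : ∀ h, 0 ≤ Vstar h ∧ Vstar h ≤ 1 / (1 - γ))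
    -- optimal (action-)value functions of the abstract MDP p
    (q : S → Bt → ℝ) (v : S → ℝ)
    (hq : ∀ s b, q s b = ∑ s' : S, ∑ r : R, p s b s' r * (ρ r + γ * v s'))
    (hv : ∀ s, v s = Finset.univ.sup' Finset.univ_nonempty (q s))
    (hvBnd : ∀ s, 0 ≤ v s ∧ v s ≤ 1 / (1 - γ))
    -- an optimal policy π* of the abstract MDP
    (πs : S → Bt) (hπs : ∀ s, q s (πs s) = v s)
    -- the uplifted policy Π̆ and its (action-)value functions
    (Pol : H → A) (hlift : ∀ h, g h (Pol h) = πs (f h))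
    (QPol : H → A → ℝ) (VPol : H → ℝ)
    (hQPol : ∀ h a, QPol h a =
      ∑ o : O, ∑ r : R, P h a o r * (ρ r + γ * VPol (ext h a o r)))
    (hVPol : ∀ h, VPol h = QPol h (Pol h))
    (hVPolBnd : ∀ h, 0 ≤ VPol h ∧ VPol h ≤ 1 / (1 - γ)) :
    ∀ h, VPol h = Vstar h := by
  have h1γ : 0 < 1 - γ := by linarith
  set M : ℝ := 2 / (1 - γ) with hM
  have hM0 : 0 ≤ M := by positivity
  have hMhalf : 1 / (1 - γ) + 1 / (1 - γ) = M := by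
    rw [hM]; ring
  -- key: rewrite abstract q along the homomorphism
  have key : ∀ h a, q (f h) (g h a)
      = ∑ o : O, ∑ r : R, P h a o r * (ρ r + γ * v (f (ext h a o r))) := by
    intro h a
    rw [hq]
    rw [Finset.sum_comm]
    conv_rhs => rw [Finset.sum_comm]
    refine Finset.sum_congr rfl fun r _ => ?_
    calc ∑ s' : S, p (f h) (g h a) s' r * (ρ r + γ * v s')
        = ∑ s' : S, ∑ o ∈ Finset.univ.filter fun o => f (ext h a o r) = s',
            P h a o r * (ρ r + γ * v (f (ext h a o r))) := by
          refine Finset.sum_congr rfl fun s' _ => ?_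
          rw [← hMDP h a s' r, Finset.sum_mul]
          refine Finset.sum_congr rfl fun o ho => ?_
          rw [(Finset.mem_filter.mp ho).2]
      _ = ∑ o : O, P h a o r * (ρ r + γ * v (f (ext h a o r))) :=
          Finset.sum_fiberwise _ _ _
  -- generic one-step contraction
  have step : ∀ (W : H → ℝ) (QW : H → A → ℝ),
      (∀ h a, QW h a = ∑ o : O, ∑ r : R, P h a o r * (ρ r + γ * W (ext h a o r))) →
      ∀ (n : ℕ), (∀ h', |W h' - v (f h')| ≤ γ ^ n * M) →
      ∀ h a, |QW h a - q (f h) (g h a)| ≤ γ ^ (n + 1) * M := by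
    intro W QW hQW n ih h a
    have hdiff : QW h a - q (f h) (g h a)
        = ∑ o : O, ∑ r : R, P h a o r * (γ * (W (ext h a o r) - v (f (ext h a o r)))) := by
      rw [hQW, key]
      rw [← Finset.sum_sub_distrib]
      refine Finset.sum_congr rfl fun o _ => ?_
      rw [← Finset.sum_sub_distrib]
      refine Finset.sum_congr rfl fun r _ => ?_
      ring
    rw [hdiff]
    have := stmt2_avg_bnd (P h a)
      (fun o r => γ * (W (ext h a o r) - v (f (ext h a o r)))) (γ ^ (n + 1) * M)
      (hP0 h a) (hP1 h a) ?_
    · exact this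
    · intro o r
      rw [abs_mul, abs_of_nonneg hγ0, pow_succ, mul_comm (γ ^ n) γ, mul_assoc]
      exact mul_le_mul_of_nonneg_left (ih _) hγ0
  -- bound for Vstar
  have bndV : ∀ (n : ℕ) (h : H), |Vstar h - v (f h)| ≤ γ ^ n * M := by
    intro n
    induction n with
    | zero =>
      intro h
      rw [pow_zero, one_mul]
      have h1 := hVstarBnd h
      have h2 := hvBnd (f h)
      rw [abs_sub_le_iff]
      constructor <;> (rw [← hMhalf]; linarith [h1.1, h1.2, h2.1, h2.2])
    | succ n ih =>
      intro h
      have hQq := step Vstar Qstar hQstar n ih h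
      rw [abs_sub_le_iff]
      constructor
      · rw [hVstar, sub_le_iff_le_add]
        refine Finset.sup'_le _ _ fun a _ => ?_
        have h1 : Qstar h a ≤ q (f h) (g h a) + γ ^ (n + 1) * M := by
          have := abs_sub_le_iff.mp (hQq a)
          linarith [this.1]
        have h2 : q (f h) (g h a) ≤ v (f h) := by
          rw [hv]; exact Finset.le_sup' _ (Finset.mem_univ _)
        linarith
      · rw [sub_le_iff_le_add]
        have h2 : v (f h) = q (f h) (g h (Pol h)) := by rw [hlift, hπs]
        have h1 : q (f h) (g h (Pol h)) ≤ Qstar h (Pol h) + γ ^ (n + 1) * M := by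
          have := abs_sub_le_iff.mp (hQq (Pol h))
          linarith [this.2]
        have h3 : Qstar h (Pol h) ≤ Vstar h := by
          rw [hVstar]; exact Finset.le_sup' _ (Finset.mem_univ _)
        linarith
  -- bound for VPol
  have bndP : ∀ (n : ℕ) (h : H), |VPol h - v (f h)| ≤ γ ^ n * M := by
    intro n
    induction n with
    | zero =>
      intro h
      rw [pow_zero, one_mul]
      have h1 := hVPolBnd h
      have h2 := hvBnd (f h)
      rw [abs_sub_le_iff]
      constructor <;> (rw [← hMhalf]; linarith [h1.1, h1.2, h2.1, h2.2])
    | succ n ih =>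
      intro h
      have hQq := step VPol QPol hQPol n ih h (Pol h)
      have h2 : v (f h) = q (f h) (g h (Pol h)) := by rw [hlift, hπs]
      rw [hVPol, h2]
      exact hQq
  -- conclude
  intro h
  have hb : ∀ n : ℕ, |VPol h - Vstar h| ≤ γ ^ n * (2 * M) := by
    intro n
    have := abs_sub_abs_le_abs_sub (VPol h - v (f h)) (Vstar h - v (f h))
    calc |VPol h - Vstar h|
        = |(VPol h - v (f h)) - (Vstar h - v (f h))| := by ring_nf
      _ ≤ |VPol h - v (f h)| + |Vstar h - v (f h)| := abs_sub _ _
      _ ≤ γ ^ n * M + γ ^ n * M := add_le_add (bndP n h) (bndV n h)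
      _ = γ ^ n * (2 * M) := by ring
  have htend : Filter.Tendsto (fun n : ℕ => γ ^ n * (2 * M)) Filter.atTop (nhds 0) := by
    have := (tendsto_pow_atTop_nhds_zero_of_lt_one hγ0 hγ1).mul_const (2 * M)
    simpa using this
  have h0 : |VPol h - Vstar h| ≤ 0 :=
    ge_of_tendsto htend (Filter.Eventually.of_forall hb)
  have := abs_nonneg (VPol h - Vstar h)
  have : VPol h - Vstar h = 0 := by
    have := abs_eq_zero.mp (le_antisymm h0 this)
    exact this
  linarith
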